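/- If x ∈ F satisfies the product constraint strictly, i.e. Π i (1 − g i (x i)) < 1 − ν, and there exists y ∈ F with Φ(y) < Φ(x), then x is not a local minimum of Φ on F: for every δ > 0 there exists z ∈ F with ‖z − x‖ < δ and Φ(z) < Φ(x). -/

import Mathlib

/-- Case 1 in the proof that every local minimum of the worst-case deceptive
policy synthesis problem is global: a feasible point satisfying the product
constraint strictly, which is not globally optimal, is not a local minimum. -/
theorem strict_constraint_not_local_min
    {n : ℕ} (hn : 0 < n)
    (E : Fin n → Type*) [∀ i, NormedAddCommGroup (E i)] [∀ i, NormedSpace ℝ (E i)]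
    (D : ∀ i, Set (E i)) (hD : ∀ i, Convex ℝ (D i))
    (f : ∀ i, E i → ℝ) (hf : ∀ i, ConvexOn ℝ (D i) (f i))
    (g : ∀ i, E i →ᵃ[ℝ] ℝ) (hg : ∀ i, ∀ z ∈ D i, 0 ≤ g i z ∧ g i z ≤ 1)
    (ν : ℝ) (hν : ν < 1)
    (F : Set (∀ i, E i))
    (hF : F = {x : ∀ i, E i | (∀ i, x i ∈ D i) ∧ ∏ i, (1 - g i (x i)) ≤ 1 - ν})
    (Φ : (∀ i, E i) → ℝ)
    (hΦ : ∀ x, Φ x = Finset.univ.sup' ⟨⟨0, hn⟩, Finset.mem_univ _⟩ (fun i => f i (x i)))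
    (x : ∀ i, E i) (hx : x ∈ F)
    (hstrict : ∏ i, (1 - g i (x i)) < 1 - ν)
    (hsub : ∃ y ∈ F, Φ y < Φ x) :
    ∀ δ > (0 : ℝ), ∃ z ∈ F, ‖z - x‖ < δ ∧ Φ z < Φ x := by
  obtain ⟨y, hyF, hΦy⟩ := hsub
  subst hF
  obtain ⟨hyD, _⟩ := hyF
  obtain ⟨hxD, _⟩ := hx
  intro δ hδ
  set P : ℝ → ℝ := fun t => ∏ i, (1 - (g i (x i) + t * (g i (y i) - g i (x i)))) with hPdef
  have hPcont : Continuous P := by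
    apply continuous_finset_prod
    intro i _
    fun_prop
  have hP0 : P 0 < 1 - ν := by simpa [hPdef] using hstrict
  have hev : ∀ᶠ t in nhds (0:ℝ), P t < 1 - ν :=
    hPcont.continuousAt.eventually_lt_const hP0
  obtain ⟨ε, hε, hball⟩ := Metric.eventually_nhds_iff.mp hev
  set t : ℝ := min (ε/2) (min (δ/(2*(‖y - x‖+1))) (1/2)) with htdef
  have hnorm1 : (0:ℝ) < ‖y - x‖ + 1 := by positivity
  have ht0 : 0 < t := by
    apply lt_min (by linarith) (lt_min (by positivity) (by norm_num))
  have ht1 : t ≤ 1/2 := le_trans (min_le_right _ _) (min_le_right _ _)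
  have htε : t < ε := lt_of_le_of_lt (min_le_left _ _) (by linarith)
  have htδ : t * (‖y - x‖ + 1) ≤ δ/2 := by
    have h1 : t ≤ δ/(2*(‖y - x‖+1)) := le_trans (min_le_right _ _) (min_le_left _ _)
    calc t * (‖y - x‖ + 1) ≤ δ/(2*(‖y - x‖+1)) * (‖y - x‖ + 1) := by
          exact mul_le_mul_of_nonneg_right h1 (by positivity)
      _ = δ/2 := by field_simp
  set z : ∀ i, E i := fun i => (1 - t) • x i + t • y i with hzdef
  have htnn : (0:ℝ) ≤ t := ht0.le
  have h1t : (0:ℝ) ≤ 1 - t := by linarith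
  have hsum : (1 - t) + t = 1 := by ring
  have hzD : ∀ i, z i ∈ D i := fun i => hD i (hxD i) (hyD i) h1t htnn hsum
  have hgz : ∀ i, g i (z i) = g i (x i) + t * (g i (y i) - g i (x i)) := by
    intro i
    have := Convex.combo_affine_apply (f := g i) (x := x i) (y := y i) hsum
    simp only [hzdef] at *
    rw [this]; simp [smul_eq_mul]; ring
  have hzC : ∏ i, (1 - g i (z i)) < 1 - ν := by
    have : ∏ i, (1 - g i (z i)) = P t := by
      simp only [hPdef]
      exact Finset.prod_congr rfl (fun i _ => by rw [hgz i])
    rw [this]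
    exact hball (by simpa [Real.dist_eq, abs_of_pos ht0] using htε)
  refine ⟨z, ⟨hzD, hzC.le⟩, ?_, ?_⟩
  · have hzx : z - x = t • (y - x) := by
      funext i
      show z i - x i = t • (y i - x i)
      simp only [hzdef]
      module
    rw [hzx, norm_smul, Real.norm_eq_abs, abs_of_pos ht0]
    have : t * ‖y - x‖ ≤ t * (‖y - x‖ + 1) := by nlinarith [norm_nonneg (y - x)]
    linarith
  · rw [hΦ z, hΦ x]
    have hx' : Φ x = Finset.univ.sup' ⟨⟨0, hn⟩, Finset.mem_univ _⟩ (fun i => f i (x i)) := hΦ x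
    have hy' : Φ y = Finset.univ.sup' ⟨⟨0, hn⟩, Finset.mem_univ _⟩ (fun i => f i (y i)) := hΦ y
    have key : Finset.univ.sup' ⟨⟨0, hn⟩, Finset.mem_univ _⟩ (fun i => f i (z i))
        ≤ (1 - t) * Φ x + t * Φ y := by
      apply Finset.sup'_le
      intro i _
      have hconv := (hf i).2 (hxD i) (hyD i) h1t htnn hsum
      simp only [smul_eq_mul] at hconv
      have hfx : f i (x i) ≤ Φ x := by
        rw [hx']; exact Finset.le_sup' (fun j => f j (x j)) (Finset.mem_univ i)
      have hfy : f i (y i) ≤ Φ y := by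
        rw [hy']; exact Finset.le_sup' (fun j => f j (y j)) (Finset.mem_univ i)
      calc f i (z i) ≤ (1 - t) * f i (x i) + t * f i (y i) := hconv
        _ ≤ (1 - t) * Φ x + t * Φ y := by nlinarith
    rw [← hx']
    refine lt_of_le_of_lt key ?_
    nlinarith
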